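/- Let g be a semisimple Lie algebra with a ℤ-grading g = ⊕_j g_j induced by a parabolic subalgebra p = ⊕_{j≥0} g_j with Levi factor m = g_0 and nilradical n = ⊕_{j>0} g_j. If x ∈ g_1 satisfies dim(centralizer of x in g) = dim m, then [p, x] = n, i.e. x is a Richardson element for p. -/

import Mathlib

open LieAlgebra

/-- Let `g` be a semisimple complex Lie algebra with a `ℤ`-grading
`g = ⊕_j g_j` (induced by a parabolic subalgebra `p = ⊕_{j≥0} g_j`, with Levi
factor `m = g_0` and nilradical `n = ⊕_{j>0} g_j`).  If `x ∈ g_1` satisfies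
`dim g^x = dim g_0`, then `[p, x] = n`, i.e. `x` is a Richardson element. -/
theorem stmt4 {L : Type*} [LieRing L] [LieAlgebra ℂ L] [FiniteDimensional ℂ L]
    [LieAlgebra.IsSemisimple ℂ L]
    (g : ℤ → Submodule ℂ L) (hinternal : DirectSum.IsInternal g)
    (hgrade : ∀ i j : ℤ, ∀ x ∈ g i, ∀ y ∈ g j, ⁅x, y⁆ ∈ g (i + j))
    (x : L) (hx : x ∈ g 1)
    (hdim : Module.finrank ℂ (LinearMap.ker (ad ℂ L x)) =
      Module.finrank ℂ (g 0)) :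
    Submodule.map (ad ℂ L x) (⨆ j ∈ Set.Ici (0 : ℤ), g j) =
      ⨆ j ∈ Set.Ioi (0 : ℤ), g j := by
  set f := ad ℂ L x with hf
  set p : Submodule ℂ L := ⨆ j ∈ Set.Ici (0 : ℤ), g j with hp
  set n : Submodule ℂ L := ⨆ j ∈ Set.Ioi (0 : ℤ), g j with hn
  have hmem_n : ∀ j : ℤ, 0 < j → g j ≤ n := fun j hj =>
    le_iSup₂ (f := fun j (_ : j ∈ Set.Ioi (0 : ℤ)) => g j) j hj
  have hmap_le : Submodule.map f p ≤ n := by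
    rw [hp, Submodule.map_iSup]
    refine iSup_le fun j => ?_
    rw [Submodule.map_iSup]
    refine iSup_le fun hj => ?_
    rintro z ⟨y, hy, rfl⟩
    have h1 : f y = ⁅x, y⁆ := rfl
    rw [h1]
    exact hmem_n (1 + j) (by simp at hj; omega) (hgrade 1 j x hx y hy)
  have hpn : p = g 0 ⊔ n := by
    apply le_antisymm
    · refine iSup_le fun j => iSup_le fun hj => ?_
      rcases eq_or_lt_of_le (Set.mem_Ici.mp hj) with h | h
      · exact h ▸ le_sup_left
      · exact (hmem_n j h).trans le_sup_right
    · refine sup_le (le_iSup₂ (f := fun j (_ : j ∈ Set.Ici (0 : ℤ)) => g j) 0 (Set.mem_Ici.mpr le_rfl)) ?_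
      exact iSup_le fun j => iSup_le fun hj =>
        le_iSup₂ (f := fun j (_ : j ∈ Set.Ici (0 : ℤ)) => g j) j (Set.mem_Ici.mpr (le_of_lt (Set.mem_Ioi.mp hj)))
  have hdisj : Disjoint (g 0) n := by
    have hind := hinternal.submodule_iSupIndep
    refine (hind 0).mono_right ?_
    exact iSup_le fun j => iSup_le fun hj =>
      le_iSup₂ (f := fun j (_ : j ≠ (0 : ℤ)) => g j) j (ne_of_gt hj)
  have hrank_p : Module.finrank ℂ p = Module.finrank ℂ (g 0) + Module.finrank ℂ n := by
    have := Submodule.finrank_sup_add_finrank_inf_eq (g 0) n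
    rw [hdisj.eq_bot, finrank_bot, ← hpn] at this
    omega
  -- rank-nullity for the restriction of f to p
  have hrn := LinearMap.finrank_range_add_finrank_ker (f.domRestrict p)
  have hrange : LinearMap.range (f.domRestrict p) = Submodule.map f p := by
    ext z
    simp [LinearMap.mem_range, Submodule.mem_map, LinearMap.domRestrict_apply]
  have hkercomap : LinearMap.ker (f.domRestrict p) = Submodule.comap p.subtype (LinearMap.ker f) := by
    ext y; simp [LinearMap.mem_ker, LinearMap.domRestrict_apply]
  have hker_le : Module.finrank ℂ (LinearMap.ker (f.domRestrict p)) ≤ Module.finrank ℂ (g 0) := by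
    rw [← hdim, hkercomap]
    have h2 : (Submodule.comap p.subtype (LinearMap.ker f)).map p.subtype
        = p ⊓ LinearMap.ker f := Submodule.map_comap_subtype p (LinearMap.ker f)
    have h3 : Module.finrank ℂ ((Submodule.comap p.subtype (LinearMap.ker f)).map p.subtype)
        = Module.finrank ℂ (Submodule.comap p.subtype (LinearMap.ker f)) :=
      Submodule.finrank_map_subtype_eq p _
    rw [← h3, h2]
    exact Submodule.finrank_mono inf_le_right
  have hrank_map : Module.finrank ℂ (Submodule.map f p)
      + Module.finrank ℂ (LinearMap.ker (f.domRestrict p)) = Module.finrank ℂ p := by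
    rw [← hrange]; exact hrn
  have hle : Module.finrank ℂ n ≤ Module.finrank ℂ (Submodule.map f p) := by omega
  exact Submodule.eq_of_le_of_finrank_le hmap_le hle
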